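/- arXiv:2109.03534 — 2 statements merged into one kernel-verified Lean document; each statement's English description precedes it below -/
import Mathlib

section
/- For all k ≥ 0, a_k(3) = (k+1)·G_2 + (binomial(k+1, k-1) + 1)·G_1. -/
/-- Binomial coefficient with an integer lower index, zero when the lower index is negative. -/
def ichoose (m : ℕ) (l : ℤ) : ℕ := if 0 ≤ l then m.choose l.toNat else 0

/-- The `k`-fold partial sum operator applied to a sequence `G` (indexed from 1). -/
def a (G : ℕ → ℕ) : ℕ → ℕ → ℕ
  | 0, n => G n
  | k + 1, n => ∑ i ∈ Finset.Icc 1 n, a G k i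

lemma a_one (G : ℕ → ℕ) (k : ℕ) : a G k 1 = G 1 := by
  induction k with
  | zero => rfl
  | succ k ih => simp [a, ih]

lemma a_two (G : ℕ → ℕ) (k : ℕ) : a G k 2 = G 2 + k * G 1 := by
  induction k with
  | zero => simp [a]
  | succ k ih =>
    show ∑ i ∈ Finset.Icc 1 2, a G k i = _
    rw [show Finset.Icc 1 2 = {1, 2} by rfl]
    simp [a_one, ih]
    ring

lemma ich_succ (k : ℕ) :
    ichoose (k + 2) ((k + 1 : ℕ) - 1 : ℤ) = ichoose (k + 1) ((k : ℤ) - 1) + (k + 1) := by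
  cases k with
  | zero => simp [ichoose]
  | succ j =>
    have h1 : ((j + 1 + 1 : ℕ) - 1 : ℤ) = ((j + 1 : ℕ) : ℤ) := by push_cast; ring
    have h2 : ((j + 1 : ℕ) : ℤ) - 1 = ((j : ℕ) : ℤ) := by push_cast; ring
    rw [h1, h2]
    simp only [ichoose, if_pos (Int.natCast_nonneg _), Int.toNat_natCast]
    have : (j + 3).choose (j + 1) = (j + 2).choose j + (j + 2).choose (j + 1) :=
      Nat.choose_succ_succ' (j + 2) j
    rw [show j + 1 + 2 = j + 3 by ring, show j + 1 + 1 = j + 2 by ring, this,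
      Nat.choose_succ_self_right]

theorem partial_sum_gibonacci_at_three (G : ℕ → ℕ)
    (hG1 : 0 < G 1) (hG2 : 0 < G 2)
    (hG : ∀ n ≥ 1, G (n + 2) = G (n + 1) + G n)
    (k : ℕ) :
    a G k 3 = (k + 1) * G 2 + (ichoose (k + 1) ((k : ℤ) - 1) + 1) * G 1 := by
  induction k with
  | zero =>
    have h3 : G 3 = G 2 + G 1 := hG 1 (le_refl 1)
    simp [a, ichoose, h3]
  | succ k ih =>
    show ∑ i ∈ Finset.Icc 1 3, a G k i = _
    rw [show Finset.Icc 1 3 = {1, 2, 3} by rfl]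
    have := ich_succ k
    push_cast at this ⊢
    simp [a_one, a_two, ih]
    rw [show ((k:ℤ) + 1 - 1) = (k:ℤ) by ring] at this
    rw [show k + 1 + 1 = k + 2 from rfl]
    rw [this]
    ring
end

section
/- For all n, k ≥ 1, a_k(n) = a_{k-1}(n+2) − binomial(n+k−1, k−1)·G_2 − binomial(n+k−1, k−2)·G_1. -/
lemma shift1 (f : ℕ → ℤ) : ∀ n, ∑ i ∈ Finset.Icc 1 n, f (i+1)
    = (∑ i ∈ Finset.Icc 1 (n+1), f i) - f 1 := by
  intro n
  induction n with
  | zero => simp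
  | succ n ih =>
      rw [Finset.sum_Icc_succ_top (by omega), Finset.sum_Icc_succ_top (by omega : 1 ≤ n+1+1), ih]
      ring

lemma shift2 (f : ℕ → ℤ) (n : ℕ) : ∑ i ∈ Finset.Icc 1 n, f (i+2)
    = (∑ i ∈ Finset.Icc 1 (n+2), f i) - f 1 - f 2 := by
  have := shift1 (fun i => f (i+1)) n
  beta_reduce at this
  rw [this, shift1 f (n+1)]
  try ring

lemma hockey (j : ℕ) : ∀ n, ∑ i ∈ Finset.Icc 1 n, (((i+j).choose j : ℤ))
    = ((n+j+1).choose (j+1) : ℤ) - 1 := by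
  intro n
  induction n with
  | zero => simp
  | succ n ih =>
      rw [Finset.sum_Icc_succ_top (by omega), ih]
      have h : (n+j+2).choose (j+1) = (n+j+1).choose j + (n+j+1).choose (j+1) :=
        Nat.choose_succ_succ (n+j+1) j
      have : n+1+j+1 = n+j+2 := by omega
      rw [this, h]
      push_cast
      have : n+1+j = n+j+1 := by omega
      rw [this]
      ring

lemma a_at_one (G : ℕ → ℕ) : ∀ k, a G k 1 = G 1 := by
  intro k
  induction k with
  | zero => rfl
  | succ k ih => simp [a, ih]

lemma a_at_two (G : ℕ → ℕ) : ∀ k, a G k 2 = k * G 1 + G 2 := by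
  intro k
  induction k with
  | zero => simp [a]
  | succ k ih =>
      show ∑ i ∈ Finset.Icc 1 2, a G k i = _
      rw [show (2:ℕ) = 1+1 from rfl, Finset.sum_Icc_succ_top (by omega), Finset.Icc_self,
        Finset.sum_singleton, a_at_one G k, ih]
      ring

lemma S0 (G : ℕ → ℕ) (hG : ∀ n ≥ 1, G (n + 2) = G (n + 1) + G n) :
    ∀ n, 1 ≤ n → (a G 1 n : ℤ) = (G (n+2) : ℤ) - G 2 := by
  intro n hn
  induction n, hn using Nat.le_induction with
  | base =>
      have h := hG 1 (by omega)
      norm_num at h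
      show ((∑ i ∈ Finset.Icc 1 1, a G 0 i : ℕ) : ℤ) = _
      simp [a]
      omega
  | succ n hn ih =>
      show ((∑ i ∈ Finset.Icc 1 (n+1), a G 0 i : ℕ) : ℤ) = _
      rw [Finset.sum_Icc_succ_top (by omega)]
      push_cast
      have h1 : ((∑ i ∈ Finset.Icc 1 n, a G 0 i : ℕ) : ℤ) = (G (n+2) : ℤ) - G 2 := ih
      push_cast at h1
      rw [h1]
      have h2 := hG (n+1) (by omega)
      rw [show n+1+2 = n+3 from by omega, show n+1+1 = n+2 from by omega] at h2
      rw [show n+1+2 = n+3 from by omega]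
      simp only [a]
      omega

lemma Tlem (G : ℕ → ℕ) (hG : ∀ n ≥ 1, G (n + 2) = G (n + 1) + G n) :
    ∀ j : ℕ, ∀ n, 1 ≤ n → (a G (j+2) n : ℤ) = (a G (j+1) (n+2) : ℤ)
      - ((n+j+1).choose (j+1) : ℤ) * G 2 - ((n+j+1).choose j : ℤ) * G 1 := by
  intro j
  induction j with
  | zero =>
      intro n hn
      show ((∑ i ∈ Finset.Icc 1 n, a G 1 i : ℕ) : ℤ) = _
      push_cast
      rw [Finset.sum_congr rfl (fun i hi => by
        have : 1 ≤ i := (Finset.mem_Icc.mp hi).1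
        exact S0 G hG i this)]
      rw [Finset.sum_sub_distrib, Finset.sum_const, Nat.card_Icc]
      rw [shift2 (fun i => (G i : ℤ)) n]
      have ha : ((a G 1 (n+2) : ℕ) : ℤ) = ∑ i ∈ Finset.Icc 1 (n+2), (G i : ℤ) := by
        show ((∑ i ∈ Finset.Icc 1 (n+2), a G 0 i : ℕ) : ℤ) = _
        push_cast
        rfl
      rw [ha]
      simp [Nat.choose_one_right]
      push_cast [Nat.add_sub_cancel]
      ring
  | succ j ih =>
      intro n hn
      show ((∑ i ∈ Finset.Icc 1 n, a G (j+2) i : ℕ) : ℤ) = _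
      push_cast
      rw [Finset.sum_congr rfl (fun i hi => by
        have : 1 ≤ i := (Finset.mem_Icc.mp hi).1
        exact ih i this)]
      rw [Finset.sum_sub_distrib, Finset.sum_sub_distrib, ← Finset.sum_mul, ← Finset.sum_mul]
      -- sum of a G (j+1) (i+2)
      rw [shift2 (fun i => (a G (j+1) i : ℤ)) n]
      have ha : ((a G (j+2) (n+2) : ℕ) : ℤ) = ∑ i ∈ Finset.Icc 1 (n+2), (a G (j+1) i : ℤ) := by
        show ((∑ i ∈ Finset.Icc 1 (n+2), a G (j+1) i : ℕ) : ℤ) = _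
        push_cast
        rfl
      rw [← ha]
      -- binomial sums
      have hb1 : ∑ i ∈ Finset.Icc 1 n, ((i+j+1).choose (j+1) : ℤ)
          = ((n+j+2).choose (j+2) : ℤ) - 1 := by
        have h := hockey (j+1) n
        rw [Finset.sum_congr rfl (fun i _ => by rw [show i+(j+1) = i+j+1 from by omega])] at h
        rw [show n+(j+1)+1 = n+j+2 from by omega] at h
        exact h
      have hb2 : ∑ i ∈ Finset.Icc 1 n, ((i+j+1).choose j : ℤ)
          = ((n+j+2).choose (j+1) : ℤ) - 1 - ((j+1).choose j : ℤ) := by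
        have h := shift1 (fun i => ((i+j).choose j : ℤ)) n
        beta_reduce at h
        rw [Finset.sum_congr rfl (fun i _ => by rw [show i+1+j = i+j+1 from by omega])] at h
        rw [h]
        have h2 := hockey j (n+1)
        rw [h2, show n+1+j+1 = n+j+2 from by omega, show 1+j = j+1 from by omega]
      rw [hb1, hb2]
      have h1 := a_at_one G (j+1)
      have h2 := a_at_two G (j+1)
      have hc : (j+1).choose j = j+1 := by
        exact Nat.choose_succ_self_right j
      rw [show n+(j+1)+1 = n+j+2 from by omega, show (j+1)+1 = j+2 from rfl]
      rw [h1, h2, hc]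
      push_cast
      ring

theorem partial_sum_gibonacci_recurrence (G : ℕ → ℕ)
    (hG1 : 0 < G 1) (hG2 : 0 < G 2)
    (hG : ∀ n ≥ 1, G (n + 2) = G (n + 1) + G n)
    (n k : ℕ) (hn : 1 ≤ n) (hk : 1 ≤ k) :
    (a G k n : ℤ) = (a G (k - 1) (n + 2) : ℤ)
      - ((n + k - 1).choose (k - 1) : ℤ) * G 2
      - (ichoose (n + k - 1) ((k : ℤ) - 2) : ℤ) * G 1 := by
  match k, hk with
  | 1, _ =>
      simp only [ichoose]
      norm_num
      have := S0 G hG n hn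
      simpa [a] using this
  | (j+2), _ =>
      have h := Tlem G hG j n hn
      rw [show n+(j+2)-1 = n+j+1 from by omega, show j+2-1 = j+1 from rfl]
      have hic : ichoose (n+j+1) ((((j:ℤ)+2)) - 2) = (n+j+1).choose j := by
        simp [ichoose]
      rw [show ((j:ℤ)+2) = (((j+2:ℕ)):ℤ) from by push_cast; ring] at hic
      push_cast at hic ⊢
      rw [hic]
      convert h using 3 <;> push_cast <;> ring
end
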